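/- Let q be a prime power with characteristic p, and for each positive integer d set g_q(d) = ∏_{ℓ prime, e_q(ℓ) = d} (1 − 1/ℓ), where the empty product equals 1. Then for every integer d ≥ 2, 0 ≤ 1 − g_q(d) ≤ ∑_{ℓ prime, e_q(ℓ) = d} 1/ℓ = O((log d)/d). In particular, g_q(d) → 1 as d → ∞ and the series ∑_{d=1}^∞ (1 − g_q(d))/d converges. -/

import Mathlib

open Filter Finset


lemma aux_weier (s : Finset ℕ) (f : ℕ → ℝ) (h0 : ∀ i ∈ s, 0 ≤ f i) (h1 : ∀ i ∈ s, f i ≤ 1) :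
    1 - ∏ i ∈ s, (1 - f i) ≤ ∑ i ∈ s, f i := by
  induction s using Finset.induction_on with
  | empty => simp
  | @insert a s ha ih =>
    have h0' : ∀ i ∈ s, 0 ≤ f i := fun i hi => h0 i (Finset.mem_insert_of_mem hi)
    have h1' : ∀ i ∈ s, f i ≤ 1 := fun i hi => h1 i (Finset.mem_insert_of_mem hi)
    have hmem := Finset.mem_insert_self a s
    have hP0 : 0 ≤ ∏ i ∈ s, (1 - f i) := Finset.prod_nonneg fun i hi => by linarith [h1' i hi]
    have hP1 : ∏ i ∈ s, (1 - f i) ≤ 1 := Finset.prod_le_one (fun i hi => by linarith [h1' i hi])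
      (fun i hi => by linarith [h0' i hi])
    rw [Finset.prod_insert ha, Finset.sum_insert ha]
    have hfa0 := h0 a hmem
    nlinarith [ih h0' h1']

lemma aux_harm : ∀ (n : ℕ) (T : Finset ℕ), T.card = n → (∀ k ∈ T, 1 ≤ k) →
    ∑ k ∈ T, (1:ℝ)/k ≤ ∑ i ∈ Finset.range n, 1/(i+1 : ℝ) := by
  intro n
  induction n with
  | zero => intro T hT _; rw [Finset.card_eq_zero] at hT; simp [hT]
  | succ n ih =>
    intro T hT h1
    have hne : T.Nonempty := Finset.card_pos.mp (by omega)
    set m := T.max' hne with hm_def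
    have hm : m ∈ T := T.max'_mem hne
    have hcard_le : T.card ≤ m := by
      have hsub : T ⊆ Finset.Icc 1 m :=
        fun k hk => Finset.mem_Icc.mpr ⟨h1 k hk, Finset.le_max' T k hk⟩
      calc T.card ≤ (Finset.Icc 1 m).card := Finset.card_le_card hsub
        _ = m := by rw [Nat.card_Icc]; omega
    have hih := ih (T.erase m) (by rw [Finset.card_erase_of_mem hm, hT]; omega)
      (fun k hk => h1 k (Finset.mem_of_mem_erase hk))
    have hsum : ∑ k ∈ T, (1:ℝ)/k = ∑ k ∈ T.erase m, (1:ℝ)/k + 1/m :=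
      (Finset.sum_erase_add T _ hm).symm
    rw [hsum, Finset.sum_range_succ]
    refine add_le_add hih ?_
    have hnm : (n:ℝ) + 1 ≤ m := by
      have : n + 1 ≤ m := by omega
      exact_mod_cast this
    have hm0 : (0:ℝ) < m := by
      have : (1:ℝ) ≤ m := by exact_mod_cast h1 m hm
      linarith
    rw [div_le_div_iff₀ hm0 (by positivity : (0:ℝ) < (n:ℝ)+1)]
    linarith


lemma aux_mem (q d : ℕ) (hq2 : 2 ≤ q) (hd : 2 ≤ d) (ℓ : ℕ)
    (hℓ : ℓ ∈ (q ^ d - 1).divisors.filter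
        (fun ℓ => ℓ.Prime ∧ orderOf (q : ZMod ℓ) = d)) :
    ℓ.Prime ∧ ℓ ∣ q ^ d - 1 ∧ d ∣ ℓ - 1 ∧ d + 1 ≤ ℓ := by
  rw [Finset.mem_filter, Nat.mem_divisors] at hℓ
  obtain ⟨⟨hdvd, _⟩, hp, hord⟩ := hℓ
  haveI : Fact ℓ.Prime := ⟨hp⟩
  have hq0 : (q : ZMod ℓ) ≠ 0 := by
    intro h
    have h1 := pow_orderOf_eq_one (q : ZMod ℓ)
    rw [hord, h, zero_pow (by omega)] at h1
    exact zero_ne_one h1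
  have hdl : d ∣ ℓ - 1 := by
    rw [← hord]
    exact orderOf_dvd_of_pow_eq_one (ZMod.pow_card_sub_one_eq_one hq0)
  have h2ℓ := hp.two_le
  have : d ≤ ℓ - 1 := Nat.le_of_dvd (by omega) hdl
  exact ⟨hp, hdvd, hdl, by omega⟩

lemma aux_sum_bound (q : ℕ) (hq2 : 2 ≤ q) :
    ∃ C : ℝ, 0 < C ∧ ∀ d : ℕ, 2 ≤ d →
      ∑ ℓ ∈ (q ^ d - 1).divisors.filter
        (fun ℓ => ℓ.Prime ∧ orderOf (q : ZMod ℓ) = d), 1 / (ℓ : ℝ)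
          ≤ C * Real.log d / d := by
  have hlog2 : (0:ℝ) < Real.log 2 := Real.log_pos (by norm_num)
  set r : ℝ := Real.log q / Real.log 2 with hr_def
  have hr1 : 1 ≤ r := by
    rw [hr_def, le_div_iff₀ hlog2, one_mul]
    exact Real.log_le_log (by norm_num) (by exact_mod_cast hq2)
  have hr0 : 0 ≤ Real.log r := Real.log_nonneg hr1
  set A : ℝ := 1 + Real.log r with hA_def
  have hA1 : 1 ≤ A := by simp [hA_def]; linarith
  refine ⟨A / Real.log 2 + 1, by positivity, ?_⟩
  intro d hd
  set S := (q ^ d - 1).divisors.filter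
    (fun ℓ => ℓ.Prime ∧ orderOf (q : ZMod ℓ) = d) with hS_def
  set n := S.card with hn_def
  have facts := fun ℓ hℓ => aux_mem q d hq2 hd ℓ hℓ
  have hdR : (0:ℝ) < d := by exact_mod_cast (by omega : 0 < d)
  have hlogd : Real.log 2 ≤ Real.log d :=
    Real.log_le_log (by norm_num) (by exact_mod_cast hd)
  have hlogd0 : 0 < Real.log d := lt_of_lt_of_le hlog2 hlogd
  rcases Nat.eq_zero_or_pos n with hn0 | hn0
  · have hSe : S = ∅ := Finset.card_eq_zero.mp hn0
    rw [hSe]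
    simp only [Finset.sum_empty]
    positivity
  -- cardinality bound
  have hprod : ∏ ℓ ∈ S, ℓ ∣ q ^ d - 1 :=
    Finset.prod_primes_dvd _ (fun p hp => (facts p hp).1.prime)
      (fun p hp => (facts p hp).2.1)
  have h2n : 2 ^ n ≤ q ^ d - 1 := by
    have hq1 : 1 < q ^ d := Nat.one_lt_pow (by omega) (by omega)
    calc 2 ^ n = ∏ _ℓ ∈ S, 2 := by rw [Finset.prod_const, hn_def]
      _ ≤ ∏ ℓ ∈ S, ℓ := Finset.prod_le_prod' (fun ℓ hℓ => (facts ℓ hℓ).1.two_le)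
      _ ≤ q ^ d - 1 := Nat.le_of_dvd (by omega) hprod
  have hnR : (n:ℝ) ≤ d * r := by
    have h1 : (2:ℝ)^n ≤ (q:ℝ)^d := by
      exact_mod_cast le_trans h2n (Nat.sub_le _ _)
    have hlog := Real.log_le_log (by positivity) h1
    rw [Real.log_pow, Real.log_pow] at hlog
    rw [hr_def, mul_div_assoc', le_div_iff₀ hlog2]
    exact hlog
  -- injection to k = (ℓ-1)/d
  have hf1 : ∀ ℓ ∈ S, 1 ≤ (ℓ - 1)/d := by
    intro ℓ hℓ
    have h := (facts ℓ hℓ).2.2.2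
    exact (Nat.one_le_div_iff (by omega)).mpr (by omega)
  have hfe : ∀ ℓ ∈ S, ℓ - 1 = d * ((ℓ-1)/d) :=
    fun ℓ hℓ => (Nat.mul_div_cancel' (facts ℓ hℓ).2.2.1).symm
  have hinj : Set.InjOn (fun ℓ => (ℓ-1)/d) S := by
    intro a ha b hb hab
    have h1 := hfe a ha; have h2 := hfe b hb
    have ha2 := (facts a ha).1.two_le; have hb2 := (facts b hb).1.two_le
    simp only at hab
    have h3 : a - 1 = b - 1 := by rw [h1, h2, hab]
    omega
  have step1 : ∑ ℓ ∈ S, 1/(ℓ:ℝ) ≤ ∑ ℓ ∈ S, 1/((d:ℝ) * (((ℓ-1)/d : ℕ):ℝ)) := by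
    apply Finset.sum_le_sum
    intro ℓ hℓ
    have h2 := (facts ℓ hℓ).1.two_le
    have he := hfe ℓ hℓ
    have hk := hf1 ℓ hℓ
    apply one_div_le_one_div_of_le
    · have : 0 < d * ((ℓ-1)/d) := by positivity
      have : (0:ℝ) < ((d * ((ℓ-1)/d) : ℕ) : ℝ) := by exact_mod_cast this
      push_cast at this
      exact this
    · have h3 : d * ((ℓ-1)/d) ≤ ℓ := by omega
      have := (Nat.cast_le (α := ℝ)).mpr h3
      push_cast at this
      exact this
  have step2 : ∑ ℓ ∈ S, 1/((d:ℝ) * (((ℓ-1)/d : ℕ):ℝ))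
      = (1/d) * ∑ k ∈ S.image (fun ℓ => (ℓ-1)/d), 1/(k:ℝ) := by
    rw [Finset.sum_image (fun a ha b hb => hinj ha hb), Finset.mul_sum]
    apply Finset.sum_congr rfl
    intro ℓ hℓ
    rw [one_div, mul_inv, one_div, one_div]
  have hcard : (S.image (fun ℓ => (ℓ-1)/d)).card = n :=
    Finset.card_image_of_injOn hinj
  have step3 : ∑ k ∈ S.image (fun ℓ => (ℓ-1)/d), 1/(k:ℝ) ≤ 1 + Real.log n := by
    refine le_trans (aux_harm n _ hcard ?_) ?_
    · intro k hk
      obtain ⟨ℓ, hℓ, rfl⟩ := Finset.mem_image.mp hk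
      exact hf1 ℓ hℓ
    · have he : ((harmonic n : ℚ) : ℝ) = ∑ i ∈ Finset.range n, 1/((i:ℝ)+1) := by
        simp only [harmonic, Rat.cast_sum, Rat.cast_inv, Rat.cast_natCast, one_div]
        push_cast
        rfl
      exact he ▸ harmonic_le_one_add_log n
  have hlogn : Real.log n ≤ Real.log d + Real.log r := by
    have h1 : Real.log n ≤ Real.log (d * r) :=
      Real.log_le_log (by exact_mod_cast hn0) hnR
    rwa [Real.log_mul (ne_of_gt hdR) (by linarith)] at h1
  have key : ∑ ℓ ∈ S, 1/(ℓ:ℝ) ≤ (1/d) * (A + Real.log d) := by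
    calc ∑ ℓ ∈ S, 1/(ℓ:ℝ) ≤ (1/d) * ∑ k ∈ S.image (fun ℓ => (ℓ-1)/d), 1/(k:ℝ) := by
          rw [← step2]; exact step1
      _ ≤ (1/d) * (1 + Real.log n) := by
          apply mul_le_mul_of_nonneg_left step3 (by positivity)
      _ ≤ (1/d) * (A + Real.log d) := by
          apply mul_le_mul_of_nonneg_left _ (by positivity)
          rw [hA_def]; linarith
  refine le_trans key ?_
  have hfin : A + Real.log d ≤ (A / Real.log 2 + 1) * Real.log d := by
    have h := mul_le_mul_of_nonneg_left hlogd (by positivity : (0:ℝ) ≤ A / Real.log 2)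
    have h2 : A / Real.log 2 * Real.log 2 = A := div_mul_cancel₀ A (ne_of_gt hlog2)
    nlinarith
  calc 1/(d:ℝ) * (A + Real.log d)
      ≤ 1/(d:ℝ) * ((A / Real.log 2 + 1) * Real.log d) :=
        mul_le_mul_of_nonneg_left hfin (by positivity)
    _ = (A / Real.log 2 + 1) * Real.log d / d := by ring

theorem gq_bounds_and_summable
    (q : ℕ) (hq2 : 2 ≤ q) (hq : ∃ p m : ℕ, p.Prime ∧ 0 < m ∧ q = p ^ m)
    (g : ℕ → ℝ)
    (hg : ∀ d : ℕ, g d =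
      ∏ ℓ ∈ (q ^ d - 1).divisors.filter
        (fun ℓ => ℓ.Prime ∧ orderOf (q : ZMod ℓ) = d), (1 - 1 / (ℓ : ℝ))) :
    (∃ C : ℝ, 0 < C ∧ ∀ d : ℕ, 2 ≤ d →
      0 ≤ 1 - g d ∧
      1 - g d ≤ ∑ ℓ ∈ (q ^ d - 1).divisors.filter
        (fun ℓ => ℓ.Prime ∧ orderOf (q : ZMod ℓ) = d), 1 / (ℓ : ℝ) ∧
      ∑ ℓ ∈ (q ^ d - 1).divisors.filter
        (fun ℓ => ℓ.Prime ∧ orderOf (q : ZMod ℓ) = d), 1 / (ℓ : ℝ)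
          ≤ C * Real.log d / d) ∧
    Tendsto g atTop (nhds 1) ∧
    Summable (fun d : ℕ => (1 - g d) / d) := by
  obtain ⟨C, hC, hCb⟩ := aux_sum_bound q hq2
  have hkey : ∀ d : ℕ, 2 ≤ d →
      0 ≤ 1 - g d ∧
      1 - g d ≤ ∑ ℓ ∈ (q ^ d - 1).divisors.filter
        (fun ℓ => ℓ.Prime ∧ orderOf (q : ZMod ℓ) = d), 1 / (ℓ : ℝ) ∧
      ∑ ℓ ∈ (q ^ d - 1).divisors.filter
        (fun ℓ => ℓ.Prime ∧ orderOf (q : ZMod ℓ) = d), 1 / (ℓ : ℝ)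
          ≤ C * Real.log d / d := by
    intro d hd
    have facts := fun ℓ hℓ => aux_mem q d hq2 hd ℓ hℓ
    have h01 : ∀ ℓ ∈ (q ^ d - 1).divisors.filter
        (fun ℓ => ℓ.Prime ∧ orderOf (q : ZMod ℓ) = d),
        0 ≤ 1/(ℓ:ℝ) ∧ 1/(ℓ:ℝ) ≤ 1 := by
      intro ℓ hℓ
      have h2 := (facts ℓ hℓ).1.two_le
      have h2R : (2:ℝ) ≤ ℓ := by exact_mod_cast h2
      constructor
      · positivity
      · rw [div_le_one (by linarith)]; linarith
    have hw := aux_weier _ (fun ℓ => 1/(ℓ:ℝ)) (fun i hi => (h01 i hi).1)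
      (fun i hi => (h01 i hi).2)
    have hg1 : g d ≤ 1 := by
      rw [hg d]
      exact Finset.prod_le_one (fun i hi => by linarith [(h01 i hi).2])
        (fun i hi => by linarith [(h01 i hi).1])
    refine ⟨by linarith, ?_, hCb d hd⟩
    rw [hg d]
    exact hw
  refine ⟨⟨C, hC, hkey⟩, ?_, ?_⟩
  · -- tendsto
    have hb : Tendsto (fun d : ℕ => C * Real.log d / d) atTop (nhds 0) := by
      have h1 : Tendsto (fun x : ℝ => Real.log x / x) atTop (nhds 0) :=
        Real.isLittleO_log_id_atTop.tendsto_div_nhds_zero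
      have h2 := (h1.const_mul C).comp tendsto_natCast_atTop_atTop
      have h3 : C * 0 = 0 := by ring
      rw [h3] at h2
      refine h2.congr (fun d => ?_)
      simp [Function.comp, mul_div_assoc]
    have h1g : Tendsto (fun d : ℕ => 1 - g d) atTop (nhds 0) := by
      refine squeeze_zero' (eventually_atTop.mpr ⟨2, fun d hd => (hkey d hd).1⟩)
        (eventually_atTop.mpr ⟨2, fun d hd =>
          le_trans (hkey d hd).2.1 (hkey d hd).2.2⟩) hb
    have := h1g.const_sub 1
    simpa using this
  · -- summable
    rw [← summable_nat_add_iff 2]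
    have hs : Summable (fun n : ℕ => 1/(n:ℝ)^((3:ℝ)/2)) :=
      Real.summable_one_div_nat_rpow.mpr (by norm_num)
    have hs2 := ((summable_nat_add_iff 2).mpr hs).mul_left (2*C)
    refine Summable.of_nonneg_of_le (fun n => ?_) (fun n => ?_) hs2
    · have h0 := (hkey (n+2) (by omega)).1
      positivity
    · set x : ℝ := ((n+2:ℕ):ℝ) with hx_def
      have hx2 : (2:ℝ) ≤ x := by rw [hx_def]; exact_mod_cast (by omega : 2 ≤ n + 2)
      have hx0 : (0:ℝ) < x := by linarith
      have hxr : (0:ℝ) < x ^ ((3:ℝ)/2) := Real.rpow_pos_of_pos hx0 _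
      have hmul : x ^ ((3:ℝ)/2) * x ^ ((1:ℝ)/2) = x^2 := by
        rw [← Real.rpow_add hx0]
        norm_num
      have hlog : Real.log x ≤ 2 * x ^ ((1:ℝ)/2) := by
        have h := Real.log_le_rpow_div hx0.le (by norm_num : (0:ℝ) < 1/2)
        rw [div_div_eq_mul_div, mul_comm] at h
        linarith [h]
      have hxx : x^((1:ℝ)/2) / x^2 = 1 / x^((3:ℝ)/2) := by
        rw [div_eq_div_iff (by positivity : (0:ℝ) < x^2).ne' hxr.ne', one_mul, mul_comm, hmul]
      have hkey2 := hkey (n+2) (by omega)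
      have hb1 : 1 - g (n+2) ≤ C * Real.log x / x := le_trans hkey2.2.1 hkey2.2.2
      calc (1 - g (n+2)) / x ≤ (C * Real.log x / x) / x := by gcongr
        _ ≤ (C * (2 * x ^ ((1:ℝ)/2)) / x) / x := by gcongr
        _ = 2*C * (x^((1:ℝ)/2) / x^2) := by ring
        _ = 2*C * (1 / x^((3:ℝ)/2)) := by rw [hxx]
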